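/- The graphs NM-hat and NO⁺(6,2)-hat are isomorphic: there exists a graph isomorphism between the graph on nonsingular symmetric 3×3 matrices over GF(2) with A ~ B iff A ≠ B and A+B has zero diagonal, and the graph on {v ∈ GF(2)⁶ : Q(v) = 1} (Q(x) = x₁x₆ + x₂x₅ + x₃x₄) with u ~ v iff u ≠ v and u+v ∈ N = {w : w₁ = w₂ = w₃ = 0}. -/

import Mathlib

open scoped Classical

/-- The graph `NM-hat`: vertices are the symmetric `3 × 3` matrices over `GF(2)` with
nonzero determinant; two distinct vertices `A, B` are adjacent iff `A + B` has zero
diagonal. -/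
noncomputable def NMhat :
    SimpleGraph {M : Matrix (Fin 3) (Fin 3) (ZMod 2) // M.IsSymm ∧ M.det ≠ 0} where
  Adj A B := A ≠ B ∧ (A.1 + B.1) 0 0 = 0 ∧ (A.1 + B.1) 1 1 = 0 ∧ (A.1 + B.1) 2 2 = 0
  symm := ⟨fun A B h => ⟨h.1.symm, by rw [add_comm]; exact h.2⟩⟩
  loopless := ⟨fun A h => h.1 rfl⟩

/-- The hyperbolic quadratic form `Q(x) = x₁x₆ + x₂x₅ + x₃x₄` on `GF(2)⁶`. -/
def quadQ (x : Fin 6 → ZMod 2) : ZMod 2 :=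
  x 0 * x 5 + x 1 * x 4 + x 2 * x 3

/-- The graph `NO⁺(6,2)-hat`: vertices are the vectors `v ∈ GF(2)⁶` with `Q(v) = 1`;
two distinct vertices `u, v` are adjacent iff `u + v` lies in the plane
`N : x₁ = x₂ = x₃ = 0`. -/
noncomputable def NO6hat : SimpleGraph {v : Fin 6 → ZMod 2 // quadQ v = 1} where
  Adj u v := u ≠ v ∧ (u.1 + v.1) 0 = 0 ∧ (u.1 + v.1) 1 = 0 ∧ (u.1 + v.1) 2 = 0
  symm := ⟨fun u v h => ⟨h.1.symm, by rw [add_comm]; exact h.2⟩⟩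
  loopless := ⟨fun u h => h.1 rfl⟩

def Fmap (M : Matrix (Fin 3) (Fin 3) (ZMod 2)) : Fin 6 → ZMod 2 :=
  ![M 0 0, M 1 1, M 2 2, M 0 1, M 0 2, M 1 2 + M 1 1 * M 2 2]

def Gmap (v : Fin 6 → ZMod 2) : Matrix (Fin 3) (Fin 3) (ZMod 2) :=
  Matrix.of ![![v 0, v 3, v 4], ![v 3, v 1, v 5 + v 1 * v 2], ![v 4, v 5 + v 1 * v 2, v 2]]

lemma cons5 (a b c d e f : ZMod 2) : (![a,b,c,d,e,f] : Fin 6 → ZMod 2) 5 = f := rfl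

lemma quadQ_Fmap (M : Matrix (Fin 3) (Fin 3) (ZMod 2)) (h : M.IsSymm) :
    quadQ (Fmap M) = M.det := by
  have h10 : M 1 0 = M 0 1 := (h.apply 1 0).symm
  have h20 : M 2 0 = M 0 2 := (h.apply 2 0).symm
  have h21 : M 2 1 = M 1 2 := (h.apply 2 1).symm
  rw [Matrix.det_fin_three, h10, h20, h21]
  simp only [quadQ, Fmap, Matrix.cons_val_zero, Matrix.cons_val_one, Matrix.head_cons,
    Matrix.cons_val_fin_one]
  generalize M 0 0 = a; generalize M 1 1 = b; generalize M 2 2 = c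
  generalize M 0 1 = p; generalize M 0 2 = q; generalize M 1 2 = r
  revert a b c p q r; decide

lemma Gmap_isSymm (v : Fin 6 → ZMod 2) : (Gmap v).IsSymm := by
  unfold Matrix.IsSymm
  ext i j
  fin_cases i <;> fin_cases j <;> rfl

lemma det_Gmap (v : Fin 6 → ZMod 2) : (Gmap v).det = quadQ v := by
  rw [Matrix.det_fin_three]
  simp only [Gmap, quadQ, Matrix.of_apply, Matrix.cons_val_zero, Matrix.cons_val_one,
    Matrix.head_cons, Matrix.cons_val_fin_one]
  generalize v 0 = a; generalize v 1 = b; generalize v 2 = c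
  generalize v 3 = p; generalize v 4 = q; generalize v 5 = r
  revert a b c p q r; decide

lemma Gmap_Fmap (M : Matrix (Fin 3) (Fin 3) (ZMod 2)) (h : M.IsSymm) :
    Gmap (Fmap M) = M := by
  have h10 : M 1 0 = M 0 1 := (h.apply 1 0).symm
  have h20 : M 2 0 = M 0 2 := (h.apply 2 0).symm
  have h21 : M 2 1 = M 1 2 := (h.apply 2 1).symm
  have habc : ∀ x y : ZMod 2, x + y + y = x := by decide
  ext i j
  fin_cases i <;> fin_cases j <;>
    simp [Gmap, Fmap, h10, h20, h21, habc, cons5]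

lemma Fmap_Gmap (v : Fin 6 → ZMod 2) : Fmap (Gmap v) = v := by
  have habc : ∀ x y : ZMod 2, x + y + y = x := by decide
  funext i
  fin_cases i <;> simp [Fmap, Gmap, habc, cons5]

/-- The graphs `NM-hat` and `NO⁺(6,2)-hat` are isomorphic. -/
theorem NMhat_iso_NO6hat : Nonempty (NMhat ≃g NO6hat) := by
  have det_ne_iff : ∀ x : ZMod 2, x ≠ 0 ↔ x = 1 := by decide
  refine ⟨⟨⟨fun A => ⟨Fmap A.1, by
      rw [quadQ_Fmap A.1 A.2.1, ← (det_ne_iff _)]; exact A.2.2⟩,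
    fun v => ⟨Gmap v.1, Gmap_isSymm v.1, by
      rw [det_Gmap, (det_ne_iff _)]; exact v.2⟩,
    fun A => Subtype.ext (Gmap_Fmap A.1 A.2.1),
    fun v => Subtype.ext (Fmap_Gmap v.1)⟩, ?_⟩⟩
  intro A B
  constructor
  · rintro ⟨hne, h0, h1, h2⟩
    refine ⟨?_, ?_, ?_, ?_⟩
    · intro hAB
      exact hne (by rw [hAB])
    · simpa [Fmap] using h0
    · simpa [Fmap] using h1
    · simpa [Fmap] using h2
  · rintro ⟨hne, h0, h1, h2⟩
    refine ⟨?_, ?_, ?_, ?_⟩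
    case _ =>
      intro h
      apply hne
      have hF : Fmap A.1 = Fmap B.1 := congrArg Subtype.val h
      have : Gmap (Fmap A.1) = Gmap (Fmap B.1) := by rw [hF]
      rw [Gmap_Fmap A.1 A.2.1, Gmap_Fmap B.1 B.2.1] at this
      exact Subtype.ext this
    · simpa [Fmap] using h0
    · simpa [Fmap] using h1
    · simpa [Fmap] using h2
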